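/- Let L, P, N_s be positive natural numbers, s : Fin N_s → (Fin L → ℝ), and C : Matrix (Fin P) (Fin P) ℝ. For each r ∈ Fin L let G_r, H_r : Matrix (Fin P) (Fin L) ℝ be matrices all of whose entries outside column r vanish, and set D = Σ_r G_r and D' = Σ_r H_r. Define F : Matrix (Fin L) (Fin L) ℝ by F r k = Σ_{t} ⟪G_r.mulVec (s t), C.mulVec (H_k.mulVec (s t))⟫. Then F = Matrix.hadamard S_s (Dᵀ * C * D'), where S_s : Matrix (Fin L) (Fin L) ℝ has entries (S_s) r k = Σ_t (s t r) * (s t k). -/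

import Mathlib

open Matrix

lemma mulVec_single_col {P L : ℕ} (A : Matrix (Fin P) (Fin L) ℝ) (r : Fin L)
    (hA : ∀ (i : Fin P) (j : Fin L), j ≠ r → A i j = 0) (v : Fin L → ℝ) (i : Fin P) :
    A.mulVec v i = A i r * v r := by
  unfold Matrix.mulVec dotProduct
  rw [Finset.sum_eq_single r]
  · intro j _ hj; simp [hA i j hj]
  · simp

/-- Theorem 1's Fisher-information block formula (combining eqs. (43)–(45)):
if each `G r` and `H r` is a `P × L` matrix supported in its `r`-th column,
`D = Σ_r G r`, `D' = Σ_r H r`, then the matrix with entries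
`F r k = Σ_t ⟪(G r) s(t), C (H k) s(t)⟫` equals the Hadamard product
`S_s ⊙ (Dᵀ C D')`, where `(S_s) r k = Σ_t s(t)_r s(t)_k`. -/
theorem stmt_11 (L P Ns : ℕ) (hL : 0 < L) (hP : 0 < P) (hNs : 0 < Ns)
    (s : Fin Ns → Fin L → ℝ)
    (C : Matrix (Fin P) (Fin P) ℝ)
    (G H : Fin L → Matrix (Fin P) (Fin L) ℝ)
    (hG : ∀ r : Fin L, ∀ (i : Fin P) (j : Fin L), j ≠ r → G r i j = 0)
    (hH : ∀ r : Fin L, ∀ (i : Fin P) (j : Fin L), j ≠ r → H r i j = 0) :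
    (Matrix.of fun r k : Fin L =>
        ∑ t : Fin Ns, ((G r).mulVec (s t)) ⬝ᵥ C.mulVec ((H k).mulVec (s t)))
      = Matrix.hadamard
          (Matrix.of fun r k : Fin L => ∑ t : Fin Ns, s t r * s t k)
          ((∑ r : Fin L, G r)ᵀ * C * (∑ r : Fin L, H r)) := by
  ext r k
  have hD : ∀ i : Fin P, (∑ r' : Fin L, G r') i r = G r i r := by
    intro i
    rw [Matrix.sum_apply, Finset.sum_eq_single r]
    · intro j _ hj; exact hG j i r (Ne.symm hj)
    · simp
  have hD' : ∀ j : Fin P, (∑ r' : Fin L, H r') j k = H k j k := by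
    intro j
    rw [Matrix.sum_apply, Finset.sum_eq_single k]
    · intro j' _ hj; exact hH j' j k (Ne.symm hj)
    · simp
  simp only [Matrix.of_apply, Matrix.hadamard_apply, Matrix.mul_apply,
    Matrix.transpose_apply, dotProduct, Matrix.mulVec, hD, hD']
  have key : ∀ t : Fin Ns,
      (∑ i : Fin P, (G r).mulVec (s t) i *
        ∑ j : Fin P, C i j * (H k).mulVec (s t) j)
      = s t r * s t k * ∑ j : Fin P, (∑ i : Fin P, G r i r * C i j) * H k j k := by
    intro t
    simp only [mulVec_single_col (G r) r (hG r), mulVec_single_col (H k) k (hH k)]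
    simp only [Finset.mul_sum, Finset.sum_mul]
    rw [Finset.sum_comm]
    exact Finset.sum_congr rfl fun j _ => Finset.sum_congr rfl fun i _ => by ring
  calc (∑ t : Fin Ns, ∑ i : Fin P, (G r).mulVec (s t) i *
        ∑ j : Fin P, C i j * (H k).mulVec (s t) j)
      = ∑ t : Fin Ns, s t r * s t k *
          ∑ j : Fin P, (∑ i : Fin P, G r i r * C i j) * H k j k := by
        exact Finset.sum_congr rfl fun t _ => key t
    _ = (∑ t : Fin Ns, s t r * s t k) *
          ∑ j : Fin P, (∑ i : Fin P, G r i r * C i j) * H k j k := by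
        rw [Finset.sum_mul]
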